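/- Let F be a field and t ≥ 1. Let Y = Y_1 ∪ ⋯ ∪ Y_t and Z = Z_1 ∪ ⋯ ∪ Z_t be finite disjoint variable sets, where the sets Y_1,…,Y_t are pairwise disjoint and the sets Z_1,…,Z_t are pairwise disjoint. For each i let g_i ∈ F[Y_i ∪ Z_i] be a multilinear polynomial and let g = g_1 ⋯ g_t. If ℓ = |{i ∈ {1,…,t} : |Y_i| ≠ |Z_i|}|, then rank(M_{(Y,Z)}(g)) ≤ 2^{(|Y| + |Z| − ℓ)/2}. -/

import Mathlib

open MvPolynomial

/-- A polynomial is multilinear if its degree in each variable is at most `1`. -/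
def IsMultilinearPoly {F V : Type} [CommSemiring F] (p : MvPolynomial V F) : Prop :=
  ∀ v, p.degreeOf v ≤ 1

/-- The partial derivative matrix `M_{(Y,Z)}(g)`: rows indexed by subsets `S ⊆ Y`,
columns by subsets `T ⊆ Z`, with `(S,T)` entry the coefficient in `g` of the monomial
`∏_{y∈S} y · ∏_{z∈T} z`. (Left summands of `V ⊕ W` are the `Y`-side variables,
right summands the `Z`-side variables.) -/
noncomputable def pdMatrix (F : Type) [CommSemiring F] {V W : Type}
    (Y : Finset V) (Z : Finset W) (g : MvPolynomial (V ⊕ W) F) :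
    Matrix {S // S ∈ Y.powerset} {T // T ∈ Z.powerset} F :=
  fun S T => MvPolynomial.coeff
    ((S.1.sum fun y => Finsupp.single (Sum.inl y) 1) +
     (T.1.sum fun z => Finsupp.single (Sum.inr z) 1)) g

section Aux

set_option linter.unusedSectionVars false

variable {F : Type} [CommSemiring F] {σ : Type} [DecidableEq σ]

lemma coeff_support_subset_of_supported {s : Set σ} {p : MvPolynomial σ F}
    (hp : p ∈ MvPolynomial.supported F s) {x : σ →₀ ℕ} (hx : MvPolynomial.coeff x p ≠ 0) :
    ↑x.support ⊆ s := by
  rw [MvPolynomial.mem_supported] at hp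
  intro v hv
  exact hp ((MvPolynomial.mem_vars v).2 ⟨x, MvPolynomial.mem_support_iff.2 hx, hv⟩)

lemma coeff_mul_of_disjoint {A B : Set σ} (hAB : Disjoint A B)
    {p q : MvPolynomial σ F} (hp : p ∈ MvPolynomial.supported F A)
    (hq : q ∈ MvPolynomial.supported F B)
    {a b : σ →₀ ℕ} (ha : ↑a.support ⊆ A) (hb : ↑b.support ⊆ B) :
    MvPolynomial.coeff (a + b) (p * q) =
      MvPolynomial.coeff a p * MvPolynomial.coeff b q := by
  rw [MvPolynomial.coeff_mul, Finset.sum_eq_single (a, b)]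
  · rintro ⟨x, y⟩ hxy hne
    by_contra h
    have hx : MvPolynomial.coeff x p ≠ 0 := fun h0 => h (by simp [h0])
    have hy : MvPolynomial.coeff y q ≠ 0 := fun h0 => h (by simp [h0])
    have hxs : ↑x.support ⊆ A := coeff_support_subset_of_supported hp hx
    have hys : ↑y.support ⊆ B := coeff_support_subset_of_supported hq hy
    have hsum : x + y = a + b := Finset.HasAntidiagonal.mem_antidiagonal.mp hxy
    have hxa : x = a := by
      ext v
      by_cases hv : v ∈ A
      · have hvB : v ∉ B := fun h2 => (Set.disjoint_left.mp hAB hv) h2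
        have h1 : y v = 0 := by
          by_contra h2; exact hvB (hys (Finsupp.mem_support_iff.2 h2))
        have h2 : b v = 0 := by
          by_contra h2; exact hvB (hb (Finsupp.mem_support_iff.2 h2))
        have h3 := congrArg (fun f => f v) hsum
        simpa [h1, h2] using h3
      · have h1 : x v = 0 := by
          by_contra h2; exact hv (hxs (Finsupp.mem_support_iff.2 h2))
        have h2 : a v = 0 := by
          by_contra h2; exact hv (ha (Finsupp.mem_support_iff.2 h2))
        rw [h1, h2]
    subst hxa
    exact hne (Prod.ext rfl (add_left_cancel hsum))
  · intro h
    exact absurd ((Finset.HasAntidiagonal.mem_antidiagonal (n := a + b) (a := (a, b))).2 rfl) h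

lemma coeff_prod_of_disjoint {ι : Type} [DecidableEq ι] (s : Finset ι)
    (A : ι → Set σ) (hA : ∀ i ∈ s, ∀ j ∈ s, i ≠ j → Disjoint (A i) (A j))
    (p : ι → MvPolynomial σ F) (hp : ∀ i ∈ s, p i ∈ MvPolynomial.supported F (A i))
    (m : ι → (σ →₀ ℕ)) (hm : ∀ i ∈ s, ↑(m i).support ⊆ A i) :
    MvPolynomial.coeff (∑ i ∈ s, m i) (∏ i ∈ s, p i) =
      ∏ i ∈ s, MvPolynomial.coeff (m i) (p i) := by
  induction s using Finset.induction_on with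
  | empty => simp
  | @insert a s has ih =>
    rw [Finset.sum_insert has, Finset.prod_insert has, Finset.prod_insert has]
    have hU : Disjoint (A a) (⋃ i ∈ s, A i) := by
      rw [Set.disjoint_iff_forall_ne]
      rintro x hx y hy rfl
      obtain ⟨i, hi, hxi⟩ := Set.mem_iUnion₂.mp hy
      exact Set.disjoint_left.mp
        (hA a (Finset.mem_insert_self a s) i (Finset.mem_insert_of_mem hi)
          (fun h => has (h ▸ hi))) hx hxi
    have hps : (∏ i ∈ s, p i) ∈ MvPolynomial.supported F (⋃ i ∈ s, A i) := by
      apply Subalgebra.prod_mem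
      intro i hi
      exact MvPolynomial.supported_mono (Set.subset_biUnion_of_mem hi)
        (hp i (Finset.mem_insert_of_mem hi))
    have hms : ↑(∑ i ∈ s, m i).support ⊆ ⋃ i ∈ s, A i := by
      intro v hv
      obtain ⟨i, hi, hvi⟩ := Finsupp.mem_support_finset_sum v (by exact_mod_cast hv)
      exact Set.mem_biUnion hi (hm i (Finset.mem_insert_of_mem hi) hvi)
    rw [coeff_mul_of_disjoint hU (hp a (Finset.mem_insert_self a s)) hps
      (hm a (Finset.mem_insert_self a s)) hms,
      ih (fun i hi j hj hij => hA i (Finset.mem_insert_of_mem hi) j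
        (Finset.mem_insert_of_mem hj) hij)
      (fun i hi => hp i (Finset.mem_insert_of_mem hi))
      (fun i hi => hm i (Finset.mem_insert_of_mem hi))]

end Aux

section Aux2

variable {V W : Type} [DecidableEq V] [DecidableEq W]

/-- The exponent finsupp of the multilinear monomial `∏_{y∈s} y · ∏_{z∈t'} z`. -/
noncomputable def s18mono (s : Finset V) (t' : Finset W) : (V ⊕ W) →₀ ℕ :=
  (s.sum fun y => Finsupp.single (Sum.inl y) 1) +
    (t'.sum fun z => Finsupp.single (Sum.inr z) 1)

lemma s18mono_support (s : Finset V) (t' : Finset W) :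
    ((s18mono s t').support : Set (V ⊕ W)) ⊆ (Sum.inl '' ↑s) ∪ (Sum.inr '' ↑t') := by
  intro v hv
  rw [Finset.mem_coe] at hv
  have hv' : v ∈ ((s.sum fun y => Finsupp.single (Sum.inl y) 1).support ∪
      (t'.sum fun z => Finsupp.single (Sum.inr z) 1).support) :=
    Finsupp.support_add (by exact_mod_cast hv)
  rcases Finset.mem_union.mp hv' with h | h
  · obtain ⟨y, hy, hvy⟩ := Finsupp.mem_support_finset_sum v h
    have := Finsupp.support_single_subset hvy
    rw [Finset.mem_singleton] at this
    exact Or.inl ⟨y, hy, this.symm⟩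
  · obtain ⟨z, hz, hvz⟩ := Finsupp.mem_support_finset_sum v h
    have := Finsupp.support_single_subset hvz
    rw [Finset.mem_singleton] at this
    exact Or.inr ⟨z, hz, this.symm⟩

lemma s18sum_decomp {α : Type} [DecidableEq α] {t : ℕ} (Y : Fin t → Finset α)
    (hY : ∀ i j, i ≠ j → Disjoint (Y i) (Y j)) (S : Finset α)
    (hS : S ⊆ Finset.univ.biUnion Y)
    {M : Type} [AddCommMonoid M] (f : α → M) :
    S.sum f = ∑ i, (S ∩ Y i).sum f := by
  have h1 : S = Finset.univ.biUnion (fun i => S ∩ Y i) := by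
    ext x
    simp only [Finset.mem_biUnion, Finset.mem_inter, Finset.mem_univ, true_and]
    constructor
    · intro hx
      obtain ⟨i, -, hi⟩ := Finset.mem_biUnion.mp (hS hx)
      exact ⟨i, hx, hi⟩
    · rintro ⟨i, hx, -⟩; exact hx
  conv_lhs => rw [h1]
  exact Finset.sum_biUnion (fun i _ j _ hij =>
    (hY i j hij).mono Finset.inter_subset_right Finset.inter_subset_right)

end Aux2

/-- setup as in the rank-multiplicativity statement; if
`ℓ = |{i : |Y_i| ≠ |Z_i|}|` then `rank(M_{(Y,Z)}(g)) ≤ 2^((|Y| + |Z| − ℓ)/2)`,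
as real numbers. -/
theorem stmt_18 (F : Type) [Field F] (t : ℕ) (ht : 1 ≤ t)
    {V W : Type} [DecidableEq V] [DecidableEq W]
    (Y : Fin t → Finset V) (Z : Fin t → Finset W)
    (hY : ∀ i j, i ≠ j → Disjoint (Y i) (Y j))
    (hZ : ∀ i j, i ≠ j → Disjoint (Z i) (Z j))
    (g : Fin t → MvPolynomial (V ⊕ W) F)
    (hsupp : ∀ i, g i ∈ MvPolynomial.supported F
      ((Sum.inl '' ↑(Y i)) ∪ (Sum.inr '' ↑(Z i))))
    (hml : ∀ i, IsMultilinearPoly (g i)) :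
    ((pdMatrix F (Finset.univ.biUnion Y) (Finset.univ.biUnion Z) (∏ i, g i)).rank : ℝ)
      ≤ (2 : ℝ) ^ ((((Finset.univ.biUnion Y).card : ℝ) +
          ((Finset.univ.biUnion Z).card : ℝ) -
          ((Finset.univ.filter fun i => (Y i).card ≠ (Z i).card).card : ℝ)) / 2) := by
  classical
  set YY := Finset.univ.biUnion Y with hYYdef
  set ZZ := Finset.univ.biUnion Z with hZZdef
  -- per-factor coefficient function
  set f : Fin t → Finset V → Finset W → F :=
    fun i s t' => MvPolynomial.coeff (s18mono s t') (g i) with hfdef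
  -- middle index finsets, of size `2 ^ min (|Y i|) (|Z i|)`
  set E : Fin t → Finset (Finset V × Finset W) := fun i =>
    if (Y i).card ≤ (Z i).card then (Y i).powerset ×ˢ ({∅} : Finset (Finset W))
    else ({∅} : Finset (Finset V)) ×ˢ (Z i).powerset with hEdef
  set a : Fin t → Finset V → Finset V × Finset W → F := fun i S k =>
    if (Y i).card ≤ (Z i).card then (if k.1 = S ∩ Y i then 1 else 0)
    else f i (S ∩ Y i) k.2 with hadef
  set b : Fin t → Finset V × Finset W → Finset W → F := fun i k T =>
    if (Y i).card ≤ (Z i).card then f i k.1 (T ∩ Z i)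
    else (if k.2 = T ∩ Z i then 1 else 0) with hbdef
  have key : ∀ (i : Fin t) (S : Finset V) (T : Finset W),
      ∑ k ∈ E i, a i S k * b i k T = f i (S ∩ Y i) (T ∩ Z i) := by
    intro i S T
    by_cases h : (Y i).card ≤ (Z i).card
    · simp only [hEdef, hadef, hbdef, if_pos h]
      rw [Finset.sum_product]
      simp only [Finset.sum_singleton, ite_mul, one_mul, zero_mul]
      rw [Finset.sum_ite_eq' ((Y i).powerset) (S ∩ Y i)
        (fun x => f i x (T ∩ Z i)),
        if_pos (Finset.mem_powerset.2 Finset.inter_subset_right)]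
    · simp only [hEdef, hadef, hbdef, if_neg h]
      rw [Finset.sum_product]
      simp only [Finset.sum_singleton, mul_ite, mul_one, mul_zero]
      rw [Finset.sum_ite_eq' ((Z i).powerset) (T ∩ Z i)
        (fun x => f i (S ∩ Y i) x),
        if_pos (Finset.mem_powerset.2 Finset.inter_subset_right)]
  -- the factorization M = A * B
  set A : Matrix {S // S ∈ YY.powerset} {p : Fin t → Finset V × Finset W // p ∈ Fintype.piFinset E} F :=
    fun S k => ∏ i, a i S.1 (k.1 i) with hAdef
  set B : Matrix {p : Fin t → Finset V × Finset W // p ∈ Fintype.piFinset E} {T // T ∈ ZZ.powerset} F :=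
    fun k T => ∏ i, b i (k.1 i) T.1 with hBdef
  have hM : pdMatrix F YY ZZ (∏ i, g i) = A * B := by
    funext S T
    rw [Matrix.mul_apply]
    have hrhs : ∑ k : {p : Fin t → Finset V × Finset W // p ∈ Fintype.piFinset E},
        A S k * B k T = ∏ i, f i (S.1 ∩ Y i) (T.1 ∩ Z i) := by
      have h1 : ∑ k : {p : Fin t → Finset V × Finset W // p ∈ Fintype.piFinset E},
          A S k * B k T =
          ∑ p ∈ Fintype.piFinset E, ((∏ i, a i S.1 (p i)) * ∏ i, b i (p i) T.1) :=
        Finset.sum_coe_sort (Fintype.piFinset E)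
          (fun (p : Fin t → Finset V × Finset W) =>
            (∏ i, a i S.1 (p i)) * ∏ i, b i (p i) T.1)
      rw [h1]
      have h2 : ∀ (p : Fin t → Finset V × Finset W),
          ((∏ i, a i S.1 (p i)) * ∏ i, b i (p i) T.1) =
          ∏ i, (a i S.1 (p i) * b i (p i) T.1) :=
        fun p => (Finset.prod_mul_distrib).symm
      simp only [h2]
      rw [← Finset.prod_univ_sum E (fun i y => a i S.1 y * b i y T.1)]
      exact Finset.prod_congr rfl (fun i _ => key i S.1 T.1)
    rw [hrhs]
    -- now the left-hand side
    show MvPolynomial.coeff (s18mono S.1 T.1) (∏ i, g i) = _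
    have hdm : s18mono S.1 T.1 = ∑ i, s18mono (S.1 ∩ Y i) (T.1 ∩ Z i) := by
      unfold s18mono
      rw [s18sum_decomp Y hY S.1 (Finset.mem_powerset.mp S.2),
        s18sum_decomp Z hZ T.1 (Finset.mem_powerset.mp T.2),
        ← Finset.sum_add_distrib]
    have hlr : ∀ (s : Set V) (t' : Set W),
        Disjoint (Sum.inl '' s : Set (V ⊕ W)) (Sum.inr '' t') := by
      intro s t'
      rw [Set.disjoint_left]
      rintro x ⟨y, -, rfl⟩ ⟨z, -, hz⟩
      simp at hz
    have hdisj : ∀ i ∈ (Finset.univ : Finset (Fin t)), ∀ j ∈ (Finset.univ : Finset (Fin t)),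
        i ≠ j → Disjoint ((Sum.inl '' ↑(Y i)) ∪ (Sum.inr '' ↑(Z i)) : Set (V ⊕ W))
          ((Sum.inl '' ↑(Y j)) ∪ (Sum.inr '' ↑(Z j))) := by
      intro i _ j _ hij
      rw [Set.disjoint_union_left]
      constructor <;> rw [Set.disjoint_union_right]
      · exact ⟨(Set.disjoint_image_iff Sum.inl_injective).2
          (Finset.disjoint_coe.2 (hY i j hij)), hlr _ _⟩
      · exact ⟨(hlr _ _).symm, (Set.disjoint_image_iff Sum.inr_injective).2
          (Finset.disjoint_coe.2 (hZ i j hij))⟩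
    have hmono : ∀ i ∈ (Finset.univ : Finset (Fin t)),
        ↑(s18mono (S.1 ∩ Y i) (T.1 ∩ Z i)).support ⊆
          ((Sum.inl '' ↑(Y i)) ∪ (Sum.inr '' ↑(Z i)) : Set (V ⊕ W)) := by
      intro i _
      refine (s18mono_support _ _).trans (Set.union_subset_union ?_ ?_)
      · exact Set.image_mono (Finset.coe_subset.2 Finset.inter_subset_right)
      · exact Set.image_mono (Finset.coe_subset.2 Finset.inter_subset_right)
    rw [hdm, coeff_prod_of_disjoint Finset.univ _ hdisj g (fun i _ => hsupp i) _ hmono]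
  -- rank bound via the width of the factorization
  have hrank : (pdMatrix F YY ZZ (∏ i, g i)).rank ≤
      Fintype.card {p : Fin t → Finset V × Finset W // p ∈ Fintype.piFinset E} := by
    rw [hM]
    exact (Matrix.rank_mul_le_left A B).trans (Matrix.rank_le_card_width A)
  have hcard : Fintype.card {p : Fin t → Finset V × Finset W // p ∈ Fintype.piFinset E}
      = 2 ^ (∑ i, min (Y i).card (Z i).card) := by
    rw [Fintype.card_coe, Fintype.card_piFinset, ← Finset.prod_pow_eq_pow_sum]
    refine Finset.prod_congr rfl (fun i _ => ?_)
    by_cases h : (Y i).card ≤ (Z i).card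
    · simp [hEdef, if_pos h, min_eq_left h]
    · simp [hEdef, if_neg h, min_eq_right (le_of_not_ge h)]
  -- the numeric inequality
  have hnat : 2 * (∑ i, min (Y i).card (Z i).card) +
      (Finset.univ.filter fun i => (Y i).card ≠ (Z i).card).card ≤
      YY.card + ZZ.card := by
    rw [hYYdef, hZZdef, Finset.card_biUnion (fun i _ j _ hij => hY i j hij),
      Finset.card_biUnion (fun i _ j _ hij => hZ i j hij), Finset.card_filter,
      Finset.mul_sum, ← Finset.sum_add_distrib, ← Finset.sum_add_distrib]
    refine Finset.sum_le_sum (fun i _ => ?_)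
    have hm1 := min_le_left (Y i).card (Z i).card
    have hm2 := min_le_right (Y i).card (Z i).card
    by_cases h : (Y i).card = (Z i).card
    · simp only [ne_eq, h, not_true_eq_false, if_false]
      omega
    · simp only [ne_eq, h, not_false_eq_true, if_true]
      rcases lt_or_gt_of_ne h with hlt | hlt <;> omega
  have hexp : ((∑ i, min (Y i).card (Z i).card : ℕ) : ℝ) ≤
      (((YY.card : ℝ) + (ZZ.card : ℝ) -
        ((Finset.univ.filter fun i => (Y i).card ≠ (Z i).card).card : ℝ)) / 2) := by
    rw [le_div_iff₀ (by norm_num : (0:ℝ) < 2)]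
    have hnat' : ((2 * (∑ i, min (Y i).card (Z i).card) +
        (Finset.univ.filter fun i => (Y i).card ≠ (Z i).card).card : ℕ) : ℝ) ≤
        ((YY.card + ZZ.card : ℕ) : ℝ) := Nat.cast_le.2 hnat
    push_cast at hnat' ⊢
    linarith
  calc ((pdMatrix F YY ZZ (∏ i, g i)).rank : ℝ)
      ≤ ((2 ^ (∑ i, min (Y i).card (Z i).card) : ℕ) : ℝ) := by
        exact_mod_cast hcard ▸ hrank
    _ = (2 : ℝ) ^ ((∑ i, min (Y i).card (Z i).card : ℕ) : ℝ) := by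
        rw [Real.rpow_natCast]; push_cast; ring
    _ ≤ _ := Real.rpow_le_rpow_of_exponent_le one_le_two hexp
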